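/- Let ≿ be a preference relation (reflexive and transitive) on the set 𝒰 of bounded real sequences satisfying axioms A1, A2 and A3. For all u, v ∈ 𝒰, if the series ∑_{t=1}^∞ (u_t − v_t) is Cesàro-summable and has bounded partial sums, then u ≿ v if and only if u ≿_B v, where u ≿_B v iff liminf_{β→1⁻} ∑_{t=1}^∞ β^t (u_t − v_t) ≥ 0. -/

import Mathlib

open Filter Finset Topology

/-- A bounded real sequence (an element of 𝒰). Index `t : ℕ` represents time `t+1`. -/
def Bdd (u : ℕ → ℝ) : Prop := ∃ C : ℝ, ∀ t, |u t| ≤ C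

/-- Partial sum `∑_{t=1}^n u_t`. -/
noncomputable def psum (u : ℕ → ℝ) (n : ℕ) : ℝ := ∑ t ∈ Finset.range n, u t

/-- Cesàro average `(1/n) ∑_{T=1}^n ∑_{t=1}^T u_t`. -/
noncomputable def cesaroAvg (u : ℕ → ℝ) (n : ℕ) : ℝ :=
  (∑ T ∈ Finset.range n, psum u (T + 1)) / n

/-- The series `∑ u_t` is Cesàro-summable. -/
def CesaroSummable (u : ℕ → ℝ) : Prop :=
  ∃ L : ℝ, Filter.Tendsto (cesaroAvg u) Filter.atTop (nhds L)

/-- The series `∑ u_t` has bounded partial sums. -/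
def BddPartialSums (u : ℕ → ℝ) : Prop := ∃ C : ℝ, ∀ n, |psum u n| ≤ C

/-- The long-run average of `u` exists and equals `a`. -/
def AvgTo (u : ℕ → ℝ) (a : ℝ) : Prop :=
  Filter.Tendsto (fun n : ℕ => psum u n / n) Filter.atTop (nhds a)

/-- The sequence `(c, u_1, u_2, …)`. -/
def cons (c : ℝ) (u : ℕ → ℝ) : ℕ → ℝ := fun t => if t = 0 then c else u (t - 1)

/-- The discounted sum `∑_{t=1}^∞ β^t d_t`. -/
noncomputable def discSum (d : ℕ → ℝ) (β : ℝ) : ℝ := ∑' t : ℕ, β ^ (t + 1) * d t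

/-- The Blackwell relation `u ≿_B v`. -/
def BlackwellGE (u v : ℕ → ℝ) : Prop :=
  0 ≤ Filter.liminf (fun β => discSum (u - v) β) (nhdsWithin 1 (Set.Iio 1))

/-- Veinott's average overtaking relation `u ≿_V v`. -/
def VeinottGE (u v : ℕ → ℝ) : Prop :=
  0 ≤ Filter.liminf (cesaroAvg (u - v)) Filter.atTop

/-- Reflexivity of the preference relation on 𝒰. -/
def ReflOn (R : (ℕ → ℝ) → (ℕ → ℝ) → Prop) : Prop := ∀ u, Bdd u → R u u

/-- Transitivity of the preference relation on 𝒰. -/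
def TransOn (R : (ℕ → ℝ) → (ℕ → ℝ) → Prop) : Prop :=
  ∀ u v w, Bdd u → Bdd v → Bdd w → R u v → R v w → R u w

/-- Strict preference `u ≻ v`. -/
def StrictPref (R : (ℕ → ℝ) → (ℕ → ℝ) → Prop) (u v : ℕ → ℝ) : Prop := R u v ∧ ¬ R v u

/-- Axiom A1: `u > v` implies `u ≻ v`. -/
def AxiomA1 (R : (ℕ → ℝ) → (ℕ → ℝ) → Prop) : Prop :=
  ∀ u v, Bdd u → Bdd v → (∀ t, v t ≤ u t) → (∃ t, v t < u t) → StrictPref R u v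

/-- Axiom A2: `u ≿ v` implies `u + α ≿ v + α`. -/
def AxiomA2 (R : (ℕ → ℝ) → (ℕ → ℝ) → Prop) : Prop :=
  ∀ u v α, Bdd u → Bdd v → Bdd α → R u v → R (u + α) (v + α)

/-- Axiom A3: if the long-run average `ū` exists then `(ū, u) ∼ u`. -/
def AxiomA3 (R : (ℕ → ℝ) → (ℕ → ℝ) → Prop) : Prop :=
  ∀ u a, Bdd u → AvgTo u a → (R (cons a u) u ∧ R u (cons a u))

/-- `w` is eventually periodic with period `p` from time `T` onward. -/
def EvPeriodicFrom (w : ℕ → ℝ) (p T : ℕ) : Prop := 1 ≤ p ∧ ∀ t, T ≤ t → w (t + p) = w t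

/-- `w` is eventually periodic. -/
def EvPeriodic (w : ℕ → ℝ) : Prop := ∃ p T : ℕ, EvPeriodicFrom w p T

/-- The set 𝒰₊: bounded streams of the form `w + Δ`, `w` eventually periodic and
`∑ Δ_t` Cesàro-summable with bounded partial sums. -/
def UPlus (u : ℕ → ℝ) : Prop :=
  Bdd u ∧ ∃ w Δ : ℕ → ℝ, u = w + Δ ∧ EvPeriodic w ∧ CesaroSummable Δ ∧ BddPartialSums Δ

/-- An `S × S` row-stochastic matrix. -/
def RowStochastic {S : ℕ} (Q : Matrix (Fin S) (Fin S) ℝ) : Prop :=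
  (∀ i j, 0 ≤ Q i j) ∧ ∀ i, ∑ j, Q i j = 1

/-- 𝒰_stat: streams generated by stationary policies of finite MDPs,
`u_t = (Q^{t-1} · R)_s` (here `u t` is `u_{t+1}`, so `u t = (Q^t · R)_s`). -/
def UStat (u : ℕ → ℝ) : Prop :=
  ∃ (S : ℕ) (_ : 0 < S) (Q : Matrix (Fin S) (Fin S) ℝ) (R : Fin S → ℝ) (s : Fin S),
    RowStochastic Q ∧ ∀ t : ℕ, u t = ((Q ^ t).mulVec R) s

/-! ### Auxiliary lemmas -/

lemma Bdd.add' {a b : ℕ → ℝ} (ha : Bdd a) (hb : Bdd b) : Bdd (a + b) := by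
  obtain ⟨C, hC⟩ := ha; obtain ⟨D, hD⟩ := hb
  exact ⟨C + D, fun t => (abs_add_le _ _).trans (add_le_add (hC t) (hD t))⟩

lemma Bdd.neg' {a : ℕ → ℝ} (ha : Bdd a) : Bdd (-a) := by
  obtain ⟨C, hC⟩ := ha; exact ⟨C, fun t => by simpa using hC t⟩

lemma bdd_zero : Bdd (0 : ℕ → ℝ) := ⟨0, fun t => by simp⟩

lemma R_shift_iff {R : (ℕ → ℝ) → (ℕ → ℝ) → Prop} (hA2 : AxiomA2 R)
    {a b α : ℕ → ℝ} (ha : Bdd a) (hb : Bdd b) (hα : Bdd α) :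
    R a b ↔ R (a + α) (b + α) := by
  constructor
  · exact fun h => hA2 _ _ _ ha hb hα h
  · intro h
    have := hA2 _ _ _ (ha.add' hα) (hb.add' hα) hα.neg' h
    simpa using this

lemma summable_geom_of_linear {β : ℝ} (hβ : |β| < 1) {c : ℕ → ℝ} {C : ℝ}
    (hC : ∀ t, |c t| ≤ C * (t + 1)) : Summable (fun t => β ^ t * c t) := by
  have hg : Summable (fun t : ℕ => ((t : ℝ) + 1) * |β| ^ t) := by
    have h2 : Summable (fun t : ℕ => (t : ℝ) ^ 1 * |β| ^ t) :=
      summable_pow_mul_geometric_of_norm_lt_one 1 (by simpa using hβ)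
    have h3 : Summable (fun t : ℕ => |β| ^ t) :=
      summable_geometric_of_lt_one (abs_nonneg β) hβ
    simpa [add_mul, pow_one] using h2.add h3
  apply Summable.of_norm_bounded (hg.mul_left C)
  intro t
  rw [norm_mul, norm_pow, Real.norm_eq_abs, Real.norm_eq_abs]
  calc |β| ^ t * |c t| ≤ |β| ^ t * (C * (t + 1)) :=
        mul_le_mul_of_nonneg_left (hC t) (pow_nonneg (abs_nonneg β) t)
    _ = C * (((t : ℝ) + 1) * |β| ^ t) := by ring

lemma abel_step {β : ℝ} {c : ℕ → ℝ} (h0 : c 0 = 0)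
    (hs : Summable (fun t => β ^ t * c t)) :
    ∑' t : ℕ, β ^ (t + 1) * (c (t + 1) - c t)
      = (1 - β) * ∑' t : ℕ, β ^ (t + 1) * c (t + 1) := by
  have h1 : Summable (fun t : ℕ => β ^ (t + 1) * c (t + 1)) :=
    (summable_nat_add_iff 1).2 hs
  have h2 : Summable (fun t : ℕ => β ^ (t + 1) * c t) :=
    (hs.mul_left β).congr (fun t => by ring)
  have key : ∑' t : ℕ, β ^ (t + 1) * c t = β * ∑' t : ℕ, β ^ (t + 1) * c (t + 1) := by
    have e1 : ∑' t : ℕ, β ^ (t + 1) * c t = β * ∑' t : ℕ, β ^ t * c t := by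
      rw [← tsum_mul_left]; exact tsum_congr fun t => by ring
    rw [e1, hs.tsum_eq_zero_add, h0]
    simp
  calc ∑' t : ℕ, β ^ (t + 1) * (c (t + 1) - c t)
      = ∑' t : ℕ, (β ^ (t + 1) * c (t + 1) - β ^ (t + 1) * c t) :=
        tsum_congr fun t => by ring
    _ = (∑' t : ℕ, β ^ (t + 1) * c (t + 1)) - ∑' t : ℕ, β ^ (t + 1) * c t :=
        h1.tsum_sub h2
    _ = (1 - β) * ∑' t : ℕ, β ^ (t + 1) * c (t + 1) := by rw [key]; ring

set_option maxHeartbeats 1600000 in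
lemma tendsto_discSum {d : ℕ → ℝ} {L C : ℝ} (hC : ∀ n, |psum d n| ≤ C)
    (hL : Filter.Tendsto (cesaroAvg d) Filter.atTop (nhds L)) :
    Filter.Tendsto (fun β => discSum d β) (nhdsWithin 1 (Set.Iio 1)) (nhds L) := by
  have hC0 : 0 ≤ C := (abs_nonneg _).trans (hC 0)
  set Sg : ℕ → ℝ := fun n => ∑ T ∈ Finset.range n, psum d (T + 1) with hSgdef
  have hSgbd : ∀ n : ℕ, |Sg n| ≤ C * (n + 1) := by
    intro n
    calc |Sg n| ≤ ∑ T ∈ Finset.range n, |psum d (T + 1)| := Finset.abs_sum_le_sum_abs _ _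
      _ ≤ ∑ _T ∈ Finset.range n, C := Finset.sum_le_sum fun i _ => hC _
      _ = C * n := by rw [Finset.sum_const, Finset.card_range, nsmul_eq_mul]; ring
      _ ≤ C * (n + 1) := by nlinarith [Nat.cast_nonneg (α := ℝ) n]
  set δ : ℕ → ℝ := fun n => cesaroAvg d n - L with hδdef
  have hδ0 : Filter.Tendsto δ Filter.atTop (nhds 0) := by
    rw [hδdef]; simpa using hL.sub_const L
  have hca : ∀ n : ℕ, cesaroAvg d n = Sg n / n := fun n => rfl
  have hSgeq : ∀ n : ℕ, Sg n = n * (δ n + L) := by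
    intro n
    have h2 : δ n = Sg n / n - L := by
      show cesaroAvg d n - L = _
      rw [hca n]
    rcases Nat.eq_zero_or_pos n with h | h
    · subst h; simp [hSgdef]
    · have hn : (n : ℝ) ≠ 0 := Nat.cast_ne_zero.2 h.ne'
      rw [h2]; field_simp; ring
  obtain ⟨D, hD0, hD⟩ : ∃ D : ℝ, 0 ≤ D ∧ ∀ n, |δ n| ≤ D := by
    refine ⟨C + |L|, by positivity, fun n => ?_⟩
    have hcb : |cesaroAvg d n| ≤ C := by
      rcases Nat.eq_zero_or_pos n with h | h
      · subst h; simpa [cesaroAvg] using hC0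
      · have hn : (0 : ℝ) < n := by exact_mod_cast h
        rw [hca n, abs_div, abs_of_pos hn, div_le_iff₀ hn]
        calc |Sg n| ≤ ∑ T ∈ Finset.range n, |psum d (T + 1)| := Finset.abs_sum_le_sum_abs _ _
          _ ≤ ∑ _T ∈ Finset.range n, C := Finset.sum_le_sum fun i _ => hC _
          _ = C * n := by rw [Finset.sum_const, Finset.card_range, nsmul_eq_mul]; ring
    have : |δ n| ≤ |cesaroAvg d n| + |L| := by
      rw [hδdef]; exact abs_sub _ _
    linarith
  have hδlin : ∀ n : ℕ, |(n : ℝ) * δ n| ≤ D * (n + 1) := by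
    intro n
    rw [abs_mul, Nat.abs_cast]
    nlinarith [hD n, abs_nonneg (δ n), Nat.cast_nonneg (α := ℝ) n]
  -- the key algebraic identity for β ∈ (0,1)
  have key : ∀ β : ℝ, β ∈ Set.Ioo (0 : ℝ) 1 →
      discSum d β = β * L + (1 - β) ^ 2 * ∑' t : ℕ, β ^ (t + 1) * (((t : ℝ) + 1) * δ (t + 1)) := by
    intro β hβm
    have hβa : |β| < 1 := by rw [abs_of_pos hβm.1]; exact hβm.2
    have hβ1 : (1 : ℝ) - β ≠ 0 := by have := hβm.2; intro h; linarith [sub_eq_zero.1 h]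
    have hs_s : Summable (fun t : ℕ => β ^ t * psum d t) :=
      summable_geom_of_linear (C := C) hβa
        (fun t => (hC t).trans (by nlinarith [Nat.cast_nonneg (α := ℝ) t]))
    have hs_Sg : Summable (fun t : ℕ => β ^ t * Sg t) :=
      summable_geom_of_linear hβa hSgbd
    have hs_nδ : Summable (fun n : ℕ => β ^ n * ((n : ℝ) * δ n)) :=
      summable_geom_of_linear hβa hδlin
    have hs_nL : Summable (fun n : ℕ => β ^ n * ((n : ℝ) * L)) := by
      refine summable_geom_of_linear (C := |L|) hβa (fun n => ?_)
      rw [abs_mul, Nat.abs_cast]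
      nlinarith [abs_nonneg L, Nat.cast_nonneg (α := ℝ) n]
    have e1 : discSum d β = (1 - β) * ∑' t : ℕ, β ^ (t + 1) * psum d (t + 1) := by
      have h : discSum d β = ∑' t : ℕ, β ^ (t + 1) * (psum d (t + 1) - psum d t) :=
        tsum_congr fun t => by
          congr 1
          simp [psum, Finset.sum_range_succ]
      rw [h]
      exact abel_step (by simp [psum]) hs_s
    have e2 : ∑' t : ℕ, β ^ (t + 1) * psum d (t + 1)
        = (1 - β) * ∑' t : ℕ, β ^ (t + 1) * Sg (t + 1) := by
      have h : ∑' t : ℕ, β ^ (t + 1) * psum d (t + 1)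
          = ∑' t : ℕ, β ^ (t + 1) * (Sg (t + 1) - Sg t) :=
        tsum_congr fun t => by
          congr 1
          simp [hSgdef, Finset.sum_range_succ]
      rw [h]
      exact abel_step (by simp [hSgdef]) hs_Sg
    have s1 : Summable (fun t : ℕ => β ^ (t + 1) * (((t : ℝ) + 1) * δ (t + 1))) :=
      ((summable_nat_add_iff 1).2 hs_nδ).congr (fun t => by push_cast; ring)
    have s2 : Summable (fun t : ℕ => β ^ (t + 1) * (((t : ℝ) + 1) * L)) :=
      ((summable_nat_add_iff 1).2 hs_nL).congr (fun t => by push_cast; ring)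
    have e3 : ∑' t : ℕ, β ^ (t + 1) * Sg (t + 1)
        = (∑' t : ℕ, β ^ (t + 1) * (((t : ℝ) + 1) * δ (t + 1)))
          + ∑' t : ℕ, β ^ (t + 1) * (((t : ℝ) + 1) * L) := by
      rw [← s1.tsum_add s2]
      refine tsum_congr fun t => ?_
      rw [hSgeq (t + 1)]
      push_cast; ring
    have hsum : Summable (fun n : ℕ => (n : ℝ) * β ^ n) := by
      simpa using summable_pow_mul_geometric_of_norm_lt_one (R := ℝ) 1 (by simpa using hβa)
    have hgeo : ∑' n : ℕ, (n : ℝ) * β ^ n = β / (1 - β) ^ 2 :=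
      tsum_coe_mul_geometric_of_norm_lt_one (by simpa using hβa)
    have e4 : ∑' t : ℕ, β ^ (t + 1) * (((t : ℝ) + 1) * L) = L * (β / (1 - β) ^ 2) := by
      calc ∑' t : ℕ, β ^ (t + 1) * (((t : ℝ) + 1) * L)
          = ∑' t : ℕ, L * ((↑(t + 1) : ℝ) * β ^ (t + 1)) := tsum_congr fun t => by push_cast; ring
        _ = L * ∑' t : ℕ, (↑(t + 1) : ℝ) * β ^ (t + 1) := tsum_mul_left
        _ = L * ∑' n : ℕ, (n : ℝ) * β ^ n := by rw [hsum.tsum_eq_zero_add]; simp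
        _ = L * (β / (1 - β) ^ 2) := by rw [hgeo]
    rw [e1, e2, e3, e4]
    field_simp
    ring
  -- eventually β ∈ (0,1)
  have hmem : Set.Ioo (0 : ℝ) 1 ∈ nhdsWithin 1 (Set.Iio 1) :=
    Ioo_mem_nhdsLT (by norm_num)
  set T : ℝ → ℝ := fun β => ∑' t : ℕ, β ^ (t + 1) * (((t : ℝ) + 1) * δ (t + 1)) with hTdef
  have hE : Filter.Tendsto (fun β : ℝ => (1 - β) ^ 2 * T β)
      (nhdsWithin 1 (Set.Iio 1)) (nhds 0) := by
    rw [Metric.tendsto_nhds]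
    intro ε hε
    obtain ⟨N, hN⟩ := (Metric.tendsto_atTop.1 hδ0) (ε / 4) (by positivity)
    set M := ∑ t ∈ Finset.range N, (((t : ℝ) + 1) * |δ (t + 1)|) with hM
    have hM0 : 0 ≤ M := Finset.sum_nonneg fun i _ => by positivity
    have h1 : ∀ᶠ β : ℝ in nhdsWithin 1 (Set.Iio 1), (1 - β) ^ 2 * M < ε / 4 := by
      have hcont : Filter.Tendsto (fun β : ℝ => (1 - β) ^ 2 * M)
          (nhdsWithin 1 (Set.Iio 1)) (nhds (((1 : ℝ) - 1) ^ 2 * M)) := by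
        apply Filter.Tendsto.mono_left _ nhdsWithin_le_nhds
        exact ((tendsto_const_nhds.sub tendsto_id).pow 2).mul_const M
      norm_num at hcont
      exact hcont.eventually_lt_const (by positivity)
    filter_upwards [hmem, h1] with β hβm h1β
    have hβa : |β| < 1 := by rw [abs_of_pos hβm.1]; exact hβm.2
    have hβ0 : (0 : ℝ) ≤ β := hβm.1.le
    have hβlt : β < 1 := hβm.2
    have hβ1 : (0 : ℝ) < 1 - β := by linarith
    have hs_nδ : Summable (fun n : ℕ => β ^ n * ((n : ℝ) * δ n)) :=
      summable_geom_of_linear hβa hδlin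
    have hg : Summable (fun t : ℕ => β ^ (t + 1) * (((t : ℝ) + 1) * δ (t + 1))) :=
      ((summable_nat_add_iff 1).2 hs_nδ).congr (fun t => by push_cast; ring)
    have hh : Summable (fun n : ℕ => (n : ℝ) * β ^ n) := by
      simpa using summable_pow_mul_geometric_of_norm_lt_one (R := ℝ) 1 (by simpa using hβa)
    have hgeo : ∑' n : ℕ, (n : ℝ) * β ^ n = β / (1 - β) ^ 2 :=
      tsum_coe_mul_geometric_of_norm_lt_one (by simpa using hβa)
    have hsplit := Summable.sum_add_tsum_nat_add
      (f := fun t : ℕ => β ^ (t + 1) * (((t : ℝ) + 1) * δ (t + 1))) N hg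
    have hhead : |∑ t ∈ Finset.range N, β ^ (t + 1) * (((t : ℝ) + 1) * δ (t + 1))| ≤ M := by
      refine (Finset.abs_sum_le_sum_abs _ _).trans ?_
      rw [hM]
      refine Finset.sum_le_sum fun i _ => ?_
      rw [abs_mul, abs_mul, abs_pow, abs_of_nonneg hβ0,
        abs_of_nonneg (by positivity : (0 : ℝ) ≤ (i : ℝ) + 1)]
      have hp1 : β ^ (i + 1) ≤ 1 := pow_le_one₀ hβ0 hβlt.le
      nlinarith [abs_nonneg (δ (i + 1)), pow_nonneg hβ0 (i + 1),
        mul_nonneg (by positivity : (0:ℝ) ≤ (i : ℝ) + 1) (abs_nonneg (δ (i + 1)))]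
    have hh2 : Summable (fun t : ℕ => ((t + N + 1 : ℕ) : ℝ) * β ^ (t + N + 1)) :=
      ((summable_nat_add_iff (N + 1)).2 hh).congr (fun t => by rw [← add_assoc])
    have htail : |∑' t : ℕ, β ^ (t + N + 1) * (((t + N : ℕ) : ℝ) + 1) * δ (t + N + 1)|
        ≤ ε / 4 * (β / (1 - β) ^ 2) := by
      have hbound : ∀ t : ℕ, ‖β ^ (t + N + 1) * (((t + N : ℕ) : ℝ) + 1) * δ (t + N + 1)‖
          ≤ ε / 4 * (((t + N + 1 : ℕ) : ℝ) * β ^ (t + N + 1)) := by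
        intro t
        rw [Real.norm_eq_abs, abs_mul, abs_mul, abs_pow, abs_of_nonneg hβ0,
          abs_of_nonneg (by positivity : (0 : ℝ) ≤ ((t + N : ℕ) : ℝ) + 1)]
        have hδsmall : |δ (t + N + 1)| ≤ ε / 4 := by
          have := hN (t + N + 1) (by omega)
          rw [Real.dist_eq, sub_zero] at this
          exact this.le
        have hc : (((t + N + 1 : ℕ) : ℝ)) = ((t + N : ℕ) : ℝ) + 1 := by push_cast; ring
        rw [hc]
        nlinarith [pow_nonneg hβ0 (t + N + 1), Nat.cast_nonneg (α := ℝ) (t + N),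
          abs_nonneg (δ (t + N + 1)),
          mul_nonneg (pow_nonneg hβ0 (t + N + 1))
            (by positivity : (0 : ℝ) ≤ ((t + N : ℕ) : ℝ) + 1)]
      have hsum2 : HasSum (fun t : ℕ => ε / 4 * (((t + N + 1 : ℕ) : ℝ) * β ^ (t + N + 1)))
          (ε / 4 * ∑' t : ℕ, ((t + N + 1 : ℕ) : ℝ) * β ^ (t + N + 1)) :=
        hh2.hasSum.mul_left (ε / 4)
      have h3 := tsum_of_norm_bounded hsum2 hbound
      refine h3.trans ?_
      have h4 : ∑' t : ℕ, ((t + N + 1 : ℕ) : ℝ) * β ^ (t + N + 1) ≤ β / (1 - β) ^ 2 := by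
        have h5 := Summable.sum_add_tsum_nat_add (f := fun n : ℕ => (n : ℝ) * β ^ n) (N + 1) hh
        have h6 : 0 ≤ ∑ i ∈ Finset.range (N + 1), (i : ℝ) * β ^ i :=
          Finset.sum_nonneg fun i _ => by positivity
        rw [hgeo] at h5
        have h7 : ∑' (i : ℕ), (fun n : ℕ => (n : ℝ) * β ^ n) (i + (N + 1))
            = ∑' t : ℕ, ((t + N + 1 : ℕ) : ℝ) * β ^ (t + N + 1) :=
          tsum_congr fun t => by beta_reduce; rw [← add_assoc]
        rw [h7] at h5
        linarith [h5]
      have hε4 : (0:ℝ) ≤ ε / 4 := by positivity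
      exact mul_le_mul_of_nonneg_left h4 hε4
    have hTbd : |T β| ≤ M + ε / 4 * (β / (1 - β) ^ 2) := by
      have h8 : T β = (∑ t ∈ Finset.range N, β ^ (t + 1) * (((t : ℝ) + 1) * δ (t + 1)))
          + ∑' i : ℕ, β ^ (i + N + 1) * (((i + N : ℕ) : ℝ) + 1) * δ (i + N + 1) := by
        rw [show T β = ∑' t : ℕ, β ^ (t + 1) * (((t : ℝ) + 1) * δ (t + 1)) from rfl, ← hsplit]
        exact congrArg₂ (· + ·) rfl (tsum_congr fun t => by beta_reduce; push_cast; ring)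
      rw [h8]
      exact (abs_add_le _ _).trans (add_le_add hhead htail)
    rw [Real.dist_eq, sub_zero, abs_mul, abs_pow, abs_of_pos hβ1]
    have hfinal : (1 - β) ^ 2 * |T β| ≤ (1 - β) ^ 2 * M + ε / 4 * β := by
      have := mul_le_mul_of_nonneg_left hTbd (by positivity : (0:ℝ) ≤ (1 - β) ^ 2)
      have hcanc : (1 - β) ^ 2 * (ε / 4 * (β / (1 - β) ^ 2)) = ε / 4 * β := by
        field_simp
      nlinarith [this]
    have : ε / 4 * β ≤ ε / 4 := by nlinarith
    calc (1 - β) ^ 2 * |T β| ≤ (1 - β) ^ 2 * M + ε / 4 * β := hfinal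
      _ < ε / 4 + ε / 4 := by linarith
      _ < ε := by linarith
  have h1 : Filter.Tendsto (fun β : ℝ => β * L) (nhdsWithin 1 (Set.Iio 1)) (nhds L) := by
    have h0 : Filter.Tendsto (fun β : ℝ => β * L) (nhds (1 : ℝ)) (nhds ((1 : ℝ) * L)) :=
      ((continuous_id (X := ℝ)).mul continuous_const).tendsto 1
    rw [one_mul] at h0
    exact h0.mono_left nhdsWithin_le_nhds
  have hmain : Filter.Tendsto (fun β : ℝ => β * L + (1 - β) ^ 2 * T β)
      (nhdsWithin 1 (Set.Iio 1)) (nhds L) := by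
    simpa using h1.add hE
  refine hmain.congr' ?_
  filter_upwards [hmem] with β hβm
  exact (key β hβm).symm

lemma Bdd.sub' {a b : ℕ → ℝ} (ha : Bdd a) (hb : Bdd b) : Bdd (a - b) := by
  obtain ⟨C, hC⟩ := ha; obtain ⟨D, hD⟩ := hb
  refine ⟨C + D, fun t => ?_⟩
  have : (a - b) t = a t - b t := rfl
  rw [this]
  exact (abs_sub _ _).trans (add_le_add (hC t) (hD t))

lemma bdd_cons {c : ℝ} {a : ℕ → ℝ} (ha : Bdd a) : Bdd (cons c a) := by
  obtain ⟨C, hC⟩ := ha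
  refine ⟨max |c| C, fun t => ?_⟩
  cases t with
  | zero => simpa [_root_.cons] using le_max_left |c| C
  | succ k => simpa [_root_.cons] using (hC k).trans (le_max_right _ _)

/-- if `∑ (u_t - v_t)` is Cesàro-summable with bounded partial
sums, then `u ≿ v ↔ u ≿_B v`. -/
theorem stmt_8 (R : (ℕ → ℝ) → (ℕ → ℝ) → Prop)
    (hrefl : ReflOn R) (htrans : TransOn R)
    (hA1 : AxiomA1 R) (hA2 : AxiomA2 R) (hA3 : AxiomA3 R)
    (u v : ℕ → ℝ) (hu : Bdd u) (hv : Bdd v)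
    (hc : CesaroSummable (u - v)) (hb : BddPartialSums (u - v)) :
    R u v ↔ BlackwellGE u v := by
  obtain ⟨L, hL⟩ := hc
  set d : ℕ → ℝ := u - v with hd
  obtain ⟨C, hCb⟩ := hb
  have hdb : Bdd d := hu.sub' hv
  -- Blackwell side
  have htend : Filter.Tendsto (fun β => discSum d β) (nhdsWithin 1 (Set.Iio 1)) (nhds L) :=
    tendsto_discSum hCb hL
  have hBiff : BlackwellGE u v ↔ 0 ≤ L := by
    unfold BlackwellGE
    rw [← hd, htend.liminf_eq]
  -- preference side
  have e1 : u + -v = d := by rw [hd, sub_eq_add_neg]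
  have e2 : v + -v = (0 : ℕ → ℝ) := by funext t; simp
  have hshift1 : R u v ↔ R d 0 := by
    rw [R_shift_iff hA2 hu hv hv.neg', e1, e2]
  set w : ℕ → ℝ := fun t => psum d (t + 1) with hwdef
  have hwb : Bdd w := ⟨C, fun t => hCb (t + 1)⟩
  have hAvg : AvgTo w L := hL
  have h3 := hA3 w L hwb hAvg
  set e : ℕ → ℝ := fun t => if t = 0 then L else 0 with hedef
  have heb : Bdd e := by
    refine ⟨|L|, fun t => ?_⟩
    by_cases h : t = 0 <;> simp [hedef, h]
  have hconsb : Bdd (cons L w) := bdd_cons hwb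
  have k1 : w + (d - w) = d := by
    funext t
    show w t + (d t - w t) = d t
    ring
  have k2 : cons L w + (d - w) = e := by
    funext t
    show cons L w t + (d t - w t) = e t
    cases t with
    | zero =>
      simp [_root_.cons, hedef, hwdef, psum, Finset.sum_range_one]
    | succ k =>
      simp [_root_.cons, hedef, hwdef, psum, Finset.sum_range_succ]
  have hiff1 := R_shift_iff hA2 hwb hconsb (hdb.sub' hwb)
  rw [k1, k2] at hiff1
  have hiff2 := R_shift_iff hA2 hconsb hwb (hdb.sub' hwb)
  rw [k1, k2] at hiff2
  have hde : R d e := hiff1.1 h3.2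
  have hed : R e d := hiff2.1 h3.1
  have hRiff : R u v ↔ 0 ≤ L := by
    rcases lt_trichotomy L 0 with hL0 | hL0 | hL0
    · -- L < 0 : both sides false
      have hstrict : StrictPref R 0 e := by
        refine hA1 0 e bdd_zero heb (fun t => ?_) ⟨0, ?_⟩
        · by_cases h : t = 0 <;> simp [hedef, h, hL0.le]
        · simpa [hedef] using hL0
      refine iff_of_false (fun hruv => ?_) (by linarith)
      have hd0 : R d 0 := hshift1.1 hruv
      exact hstrict.2 (htrans e d 0 heb hdb bdd_zero hed hd0)
    · -- L = 0
      have h0 : e = 0 := by funext t; simp [hedef, hL0]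
      rw [h0] at hde
      exact iff_of_true (hshift1.2 hde) (le_of_eq hL0.symm)
    · -- 0 < L
      have hstrict : StrictPref R e 0 := by
        refine hA1 e 0 heb bdd_zero (fun t => ?_) ⟨0, ?_⟩
        · by_cases h : t = 0 <;> simp [hedef, h, hL0.le]
        · simpa [hedef] using hL0
      have hd0 : R d 0 := htrans d e 0 hdb heb bdd_zero hde hstrict.1
      exact iff_of_true (hshift1.2 hd0) hL0.le
  rw [hRiff, hBiff]
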